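/- Suppose a nonnegative random process τ(a), a > 0, is non-decreasing in a, and for each fixed a, τ(a)/a² has density q(t) = 2E(X/√t − 1)₊ with X standard normal. Then for every δ ∈ (0, 1/2), almost surely for all sufficiently large T: τ(T^{1/2+δ}) > T > τ(T^{1/2−δ}). -/
import Mathlib
open MeasureTheory Set Filter

noncomputable def q (t : ℝ) : ℝ :=
  2 * ∫ x, max (x / Real.sqrt t - 1) 0 ∂(ProbabilityTheory.gaussianReal 0 1)

namespace Stmt19
open Real ProbabilityTheory

noncomputable def γ : Measure ℝ := gaussianReal 0 1

lemma γ_eq : γ = volume.withDensity (gaussianPDF 0 1) :=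
  gaussianReal_of_var_ne_zero 0 one_ne_zero

lemma integrable_γ_of_vol {g : ℝ → ℝ} (hg : Measurable g)
    (h : Integrable (fun x => g x * gaussianPDFReal 0 1 x) volume) :
    Integrable g γ := by
  rw [γ_eq, integrable_withDensity_iff (measurable_gaussianPDF 0 1)
      (Filter.Eventually.of_forall fun x => ENNReal.ofReal_lt_top)]
  refine h.congr (Filter.Eventually.of_forall fun x => ?_)
  simp only [gaussianPDF, ENNReal.toReal_ofReal (gaussianPDFReal_nonneg 0 1 x)]

lemma pdf_eq (x : ℝ) :
    gaussianPDFReal 0 1 x = (Real.sqrt (2 * π))⁻¹ * Real.exp (-(1/2) * x ^ 2) := by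
  rw [gaussianPDFReal]
  norm_num
  ring_nf
  simp

lemma integrable_abs_γ : Integrable (fun x : ℝ => |x|) γ := by
  apply integrable_γ_of_vol measurable_abs
  have h := ((integrable_rpow_mul_exp_neg_mul_sq (b:=1/2) (by norm_num) (s:=1)
      (by norm_num)).abs.const_mul ((Real.sqrt (2*π))⁻¹))
  refine h.congr (Filter.Eventually.of_forall fun x => ?_)
  dsimp only
  rw [pdf_eq, Real.rpow_one, abs_mul, abs_of_nonneg (Real.exp_nonneg _)]
  ring

lemma integrable_pow4_γ : Integrable (fun x : ℝ => x ^ 4) γ := by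
  apply integrable_γ_of_vol (by measurability)
  have h := ((integrable_rpow_mul_exp_neg_mul_sq (b:=1/2) (by norm_num) (s:=4)
      (by norm_num)).const_mul ((Real.sqrt (2*π))⁻¹))
  refine h.congr (Filter.Eventually.of_forall fun x => ?_)
  dsimp only
  rw [pdf_eq]
  rw [show ((4:ℝ) = ((4:ℕ):ℝ)) by norm_num, Real.rpow_natCast]
  ring

end Stmt19

namespace Stmt19
open Real ProbabilityTheory

noncomputable def C1 : ℝ := ∫ x, |x| ∂γ
noncomputable def C2 : ℝ := ∫ x, x ^ 4 ∂γ

lemma C1_nonneg : 0 ≤ C1 := integral_nonneg fun x => abs_nonneg x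
lemma C2_nonneg : 0 ≤ C2 := integral_nonneg fun x => by positivity

lemma q_eq (t : ℝ) : q t = 2 * ∫ x, max (x / Real.sqrt t - 1) 0 ∂γ := rfl

lemma q_le_sqrt {t : ℝ} (ht : 0 < t) : q t ≤ 2 * C1 / Real.sqrt t := by
  have hs : 0 < Real.sqrt t := Real.sqrt_pos.2 ht
  rw [q_eq]
  have key : (∫ x, max (x / Real.sqrt t - 1) 0 ∂γ) ≤ ∫ x, |x| / Real.sqrt t ∂γ := by
    refine integral_mono_of_nonneg (Filter.Eventually.of_forall fun x => le_max_right _ _)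
      (integrable_abs_γ.div_const _) (Filter.Eventually.of_forall fun x => ?_)
    refine max_le ?_ (by positivity)
    have : x / Real.sqrt t ≤ |x| / Real.sqrt t :=
      div_le_div_of_nonneg_right (le_abs_self x) hs.le
    linarith
  rw [integral_div] at key
  rw [mul_div_assoc]
  unfold C1
  linarith

lemma q_le_sq {t : ℝ} (ht : 0 < t) : q t ≤ 2 * C2 / t ^ 2 := by
  have hs : 0 < Real.sqrt t := Real.sqrt_pos.2 ht
  have ht2 : (0:ℝ) < t ^ 2 := by positivity
  rw [q_eq]
  have key : (∫ x, max (x / Real.sqrt t - 1) 0 ∂γ) ≤ ∫ x, x ^ 4 / t ^ 2 ∂γ := by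
    refine integral_mono_of_nonneg (Filter.Eventually.of_forall fun x => le_max_right _ _)
      (integrable_pow4_γ.div_const _) (Filter.Eventually.of_forall fun x => ?_)
    refine max_le ?_ (by positivity)
    rcases le_or_gt x (Real.sqrt t) with h | h
    · have : x / Real.sqrt t ≤ 1 := (div_le_one hs).2 h
      have : (0:ℝ) ≤ x ^ 4 / t ^ 2 := by positivity
      linarith
    · have hy : 1 ≤ x / Real.sqrt t := (one_le_div hs).2 h.le
      have h4 : x / Real.sqrt t ≤ (x / Real.sqrt t) ^ 4 := le_self_pow₀ hy (by norm_num)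
      have h2 : Real.sqrt t ^ 4 = t ^ 2 := by
        rw [show (4:ℕ) = 2 * 2 from rfl, pow_mul, Real.sq_sqrt ht.le]
      have heq : (x / Real.sqrt t) ^ 4 = x ^ 4 / t ^ 2 := by rw [div_pow, h2]
      linarith [h4, heq ▸ h4]
  rw [integral_div] at key
  rw [mul_div_assoc]
  unfold C2
  linarith

end Stmt19

namespace Stmt19
open Real ProbabilityTheory

noncomputable def dens : ℝ → ENNReal := fun t => ENNReal.ofReal (if 0 < t then q t else 0)

lemma meas_Iic {Ω : Type*} [MeasurableSpace Ω] (μ : Measure Ω) (f : Ω → ℝ) (hf : Measurable f)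
    (hlaw : Measure.map f μ = volume.withDensity dens)
    {ε : ℝ} (hε : 0 ≤ ε) :
    μ {ω | f ω ≤ ε} ≤ ENNReal.ofReal (4 * C1 * Real.sqrt ε) := by
  have h1 : {ω | f ω ≤ ε} = f ⁻¹' (Iic ε) := rfl
  rw [h1, ← Measure.map_apply hf measurableSet_Iic, hlaw,
    withDensity_apply _ measurableSet_Iic]
  have hsplit : Iic ε = Iic (0:ℝ) ∪ Ioc 0 ε := (Iic_union_Ioc_eq_Iic hε).symm
  calc ∫⁻ t in Iic ε, dens t
      ≤ (∫⁻ t in Iic (0:ℝ), dens t) + ∫⁻ t in Ioc (0:ℝ) ε, dens t := by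
        rw [hsplit]; exact lintegral_union_le dens _ _
    _ = ∫⁻ t in Ioc (0:ℝ) ε, dens t := by
        have hz : ∀ᵐ t ∂(volume.restrict (Iic (0:ℝ))), dens t = 0 :=
          (ae_restrict_iff' measurableSet_Iic).2 (Filter.Eventually.of_forall
            (fun t ht => by simp [dens, not_lt.2 (mem_Iic.1 ht)]))
        rw [lintegral_congr_ae hz, lintegral_zero, zero_add]
    _ ≤ ∫⁻ t in Ioc (0:ℝ) ε, ENNReal.ofReal (2 * C1 * t ^ (-(1:ℝ)/2)) := by
        refine lintegral_mono_ae ((ae_restrict_iff' measurableSet_Ioc).2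
          (Filter.Eventually.of_forall fun t ht => ?_))
        have ht1 : 0 < t := ht.1
        have hb : 2 * C1 / Real.sqrt t = 2 * C1 * t ^ (-(1:ℝ)/2) := by
          rw [Real.sqrt_eq_rpow, div_eq_mul_inv, ← Real.rpow_neg ht1.le]
          norm_num
        rw [show dens t = ENNReal.ofReal (q t) by simp [dens, if_pos ht1]]
        exact ENNReal.ofReal_le_ofReal (hb ▸ q_le_sqrt ht1)
    _ = ENNReal.ofReal (∫ t in Ioc (0:ℝ) ε, 2 * C1 * t ^ (-(1:ℝ)/2)) := by
        rw [ofReal_integral_eq_lintegral_ofReal]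
        · exact ((intervalIntegrable_iff_integrableOn_Ioc_of_le hε).1
            (intervalIntegral.intervalIntegrable_rpow' (by norm_num))).const_mul _
        · refine (ae_restrict_iff' measurableSet_Ioc).2
            (Filter.Eventually.of_forall fun t ht => ?_)
          have h0 : (0:ℝ) ≤ t ^ (-(1:ℝ)/2) := Real.rpow_nonneg ht.1.le _
          have := C1_nonneg
          positivity
    _ ≤ ENNReal.ofReal (4 * C1 * Real.sqrt ε) := by
        refine ENNReal.ofReal_le_ofReal ?_
        rw [← intervalIntegral.integral_of_le hε, intervalIntegral.integral_const_mul,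
          integral_rpow (Or.inl (by norm_num)),
          show (-(1:ℝ)/2 + 1) = 1/2 by norm_num, Real.zero_rpow (by norm_num),
          Real.sqrt_eq_rpow]
        ring_nf
        exact le_refl _

end Stmt19

namespace Stmt19
open Real ProbabilityTheory

lemma meas_Ici {Ω : Type*} [MeasurableSpace Ω] (μ : Measure Ω) (f : Ω → ℝ) (hf : Measurable f)
    (hlaw : Measure.map f μ = volume.withDensity dens) {s : ℝ} (hs : 0 < s) :
    μ {ω | s ≤ f ω} ≤ ENNReal.ofReal (2 * C2 / s) := by
  have h1 : {ω | s ≤ f ω} = f ⁻¹' (Ici s) := rfl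
  rw [h1, ← Measure.map_apply hf measurableSet_Ici, hlaw,
    withDensity_apply _ measurableSet_Ici]
  calc ∫⁻ t in Ici s, dens t
      = ∫⁻ t in Ioi s, dens t := (setLIntegral_congr (Ioi_ae_eq_Ici (a := s))).symm
    _ ≤ ∫⁻ t in Ioi s, ENNReal.ofReal (2 * C2 * t ^ (-(2:ℝ))) := by
        refine lintegral_mono_ae ((ae_restrict_iff' measurableSet_Ioi).2
          (Filter.Eventually.of_forall fun t ht => ?_))
        have ht1 : 0 < t := hs.trans ht
        have hb : 2 * C2 / t ^ 2 = 2 * C2 * t ^ (-(2:ℝ)) := by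
          rw [Real.rpow_neg ht1.le, Real.rpow_two, div_eq_mul_inv]
        rw [show dens t = ENNReal.ofReal (q t) by simp [dens, if_pos ht1]]
        exact ENNReal.ofReal_le_ofReal (hb ▸ q_le_sq ht1)
    _ = ENNReal.ofReal (∫ t in Ioi s, 2 * C2 * t ^ (-(2:ℝ))) := by
        rw [ofReal_integral_eq_lintegral_ofReal]
        · exact (integrableOn_Ioi_rpow_of_lt (by norm_num) hs).const_mul _
        · refine (ae_restrict_iff' measurableSet_Ioi).2
            (Filter.Eventually.of_forall fun t ht => ?_)
          have h0 : (0:ℝ) ≤ t ^ (-(2:ℝ)) := Real.rpow_nonneg (hs.trans ht).le _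
          have := C2_nonneg
          positivity
    _ ≤ ENNReal.ofReal (2 * C2 / s) := by
        refine ENNReal.ofReal_le_ofReal ?_
        rw [integral_const_mul, integral_Ioi_rpow_of_lt (by norm_num) hs,
          show (-(2:ℝ) + 1) = -1 by norm_num, Real.rpow_neg_one, div_eq_mul_inv]
        ring_nf
        exact le_refl _

end Stmt19

namespace Stmt19
open Real ProbabilityTheory

lemma tsum_ne_top_of_geom {u : ℕ → ENNReal} {c r c' r' : ℝ} (hr : r < 1) (hr' : r' < 1)
    (h : ∀ n, u n ≤ ENNReal.ofReal c * (ENNReal.ofReal r) ^ n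
      + ENNReal.ofReal c' * (ENNReal.ofReal r') ^ n) :
    ∑' n, u n ≠ ⊤ := by
  have hle := ENNReal.tsum_le_tsum h
  rw [ENNReal.tsum_add, ENNReal.tsum_mul_left, ENNReal.tsum_mul_left,
    ENNReal.tsum_geometric, ENNReal.tsum_geometric] at hle
  refine ne_top_of_le_ne_top ?_ hle
  have h1 : (1 - ENNReal.ofReal r)⁻¹ ≠ ⊤ := by
    rw [ENNReal.inv_ne_top]
    intro hz
    rw [tsub_eq_zero_iff_le] at hz
    exact absurd (lt_of_lt_of_le (ENNReal.ofReal_lt_one.2 hr) hz) (lt_irrefl _)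
  have h2 : (1 - ENNReal.ofReal r')⁻¹ ≠ ⊤ := by
    rw [ENNReal.inv_ne_top]
    intro hz
    rw [tsub_eq_zero_iff_le] at hz
    exact absurd (lt_of_lt_of_le (ENNReal.ofReal_lt_one.2 hr') hz) (lt_irrefl _)
  exact ENNReal.add_ne_top.2
    ⟨ENNReal.mul_ne_top ENNReal.ofReal_ne_top h1, ENNReal.mul_ne_top ENNReal.ofReal_ne_top h2⟩

lemma rpow_split (x y : ℝ) (n : ℕ) :
    (2:ℝ) ^ (x + (n:ℝ) * y) = (2:ℝ) ^ x * ((2:ℝ) ^ y) ^ n := by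
  rw [Real.rpow_add two_pos, mul_comm (n:ℝ) y, Real.rpow_mul (by norm_num : (0:ℝ) ≤ 2),
    Real.rpow_natCast]

end Stmt19

open Stmt19 in
theorem stmt_19 {Ω : Type*} [MeasurableSpace Ω] (μ : Measure Ω) [IsProbabilityMeasure μ]
    (τ : ℝ → Ω → ℝ)
    (hmeas : ∀ a : ℝ, 0 < a → Measurable (τ a))
    (hnonneg : ∀ a : ℝ, 0 < a → ∀ ω, 0 ≤ τ a ω)
    (hmono : ∀ ω, ∀ a b : ℝ, 0 < a → a ≤ b → τ a ω ≤ τ b ω)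
    (hlaw : ∀ a : ℝ, 0 < a →
      Measure.map (fun ω => τ a ω / a ^ 2) μ =
        volume.withDensity (fun t => ENNReal.ofReal (if 0 < t then q t else 0))) :
    ∀ δ : ℝ, 0 < δ → δ < 1 / 2 →
      ∀ᵐ ω ∂μ, ∀ᶠ T : ℝ in atTop,
        τ (T ^ ((1:ℝ)/2 + δ)) ω > T ∧ T > τ (T ^ ((1:ℝ)/2 - δ)) ω := by
  intro δ hδ0 hδ2
  -- dyadic scales
  set a : ℕ → ℝ := fun n => (2:ℝ) ^ ((n:ℝ) * (1/2 + δ)) with ha_def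
  set b : ℕ → ℝ := fun n => (2:ℝ) ^ (((n:ℝ) + 1) * (1/2 - δ)) with hb_def
  have hapos : ∀ n, 0 < a n := fun n => Real.rpow_pos_of_pos two_pos _
  have hbpos : ∀ n, 0 < b n := fun n => Real.rpow_pos_of_pos two_pos _
  set A : ℕ → Set Ω := fun n => {ω | τ (a n) ω ≤ (2:ℝ) ^ ((n:ℝ) + 1)} with hA_def
  set B : ℕ → Set Ω := fun n => {ω | (2:ℝ) ^ (n:ℝ) ≤ τ (b n) ω} with hB_def
  -- bounds on the probabilities
  have hAbd : ∀ n, μ (A n) ≤ ENNReal.ofReal (4 * C1 * ((2:ℝ) ^ ((1:ℝ)/2) * ((2:ℝ) ^ (-δ)) ^ n)) := by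
    intro n
    have hpos := hapos n
    have hsq : (0:ℝ) < (a n) ^ 2 := by positivity
    have hset : A n = {ω | τ (a n) ω / (a n) ^ 2 ≤ (2:ℝ) ^ ((n:ℝ) + 1) / (a n) ^ 2} := by
      ext ω
      simp only [hA_def, mem_setOf_eq]
      exact (div_le_div_iff_of_pos_right hsq).symm
    have hε : (0:ℝ) ≤ (2:ℝ) ^ ((n:ℝ) + 1) / (a n) ^ 2 := by positivity
    have hbd := meas_Iic μ _ ((hmeas _ hpos).div_const _) (hlaw _ hpos) hε
    rw [← hset] at hbd
    refine hbd.trans (ENNReal.ofReal_le_ofReal ?_)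
    have hsqrt : Real.sqrt ((2:ℝ) ^ ((n:ℝ) + 1) / (a n) ^ 2)
        = (2:ℝ) ^ ((1:ℝ)/2) * ((2:ℝ) ^ (-δ)) ^ n := by
      have h1 : (a n) ^ 2 = (2:ℝ) ^ ((n:ℝ) * (1/2 + δ) * 2) := by
        rw [ha_def]
        rw [← Real.rpow_natCast ((2:ℝ) ^ ((n:ℝ) * (1/2 + δ))) 2,
          ← Real.rpow_mul (by norm_num : (0:ℝ) ≤ 2)]
        norm_num
      rw [h1, ← Real.rpow_sub two_pos, Real.sqrt_eq_rpow,
        ← Real.rpow_mul (by norm_num : (0:ℝ) ≤ 2),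
        show ((n:ℝ) + 1 - (n:ℝ) * (1/2 + δ) * 2) * (1/2) = 1/2 + (n:ℝ) * (-δ) by ring,
        rpow_split]
    rw [hsqrt]
  have hBbd : ∀ n, μ (B n) ≤ ENNReal.ofReal (2 * C2 * ((2:ℝ) ^ ((1:ℝ) - 2*δ) * ((2:ℝ) ^ (-(2*δ))) ^ n)) := by
    intro n
    have hpos := hbpos n
    have hsq : (0:ℝ) < (b n) ^ 2 := by positivity
    have hset : B n = {ω | (2:ℝ) ^ (n:ℝ) / (b n) ^ 2 ≤ τ (b n) ω / (b n) ^ 2} := by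
      ext ω
      simp only [hB_def, mem_setOf_eq]
      exact (div_le_div_iff_of_pos_right hsq).symm
    have hs : (0:ℝ) < (2:ℝ) ^ (n:ℝ) / (b n) ^ 2 := by positivity
    have hbd := meas_Ici μ _ ((hmeas _ hpos).div_const _) (hlaw _ hpos) hs
    rw [← hset] at hbd
    refine hbd.trans (ENNReal.ofReal_le_ofReal ?_)
    have hval : 2 * C2 / ((2:ℝ) ^ (n:ℝ) / (b n) ^ 2)
        = 2 * C2 * ((2:ℝ) ^ ((1:ℝ) - 2*δ) * ((2:ℝ) ^ (-(2*δ))) ^ n) := by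
      have h1 : (b n) ^ 2 = (2:ℝ) ^ (((n:ℝ) + 1) * (1/2 - δ) * 2) := by
        rw [hb_def]
        rw [← Real.rpow_natCast ((2:ℝ) ^ (((n:ℝ) + 1) * (1/2 - δ))) 2,
          ← Real.rpow_mul (by norm_num : (0:ℝ) ≤ 2)]
        norm_num
      rw [h1, ← Real.rpow_sub two_pos, div_eq_mul_inv (2 * C2),
        ← Real.rpow_neg (by norm_num : (0:ℝ) ≤ 2),
        show -((n:ℝ) - ((n:ℝ) + 1) * (1/2 - δ) * 2) = ((1:ℝ) - 2*δ) + (n:ℝ) * (-(2*δ)) by ring,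
        rpow_split]
    rw [hval]
  -- Borel-Cantelli
  have hsum : (∑' n, μ (A n ∪ B n)) ≠ ⊤ := by
    refine tsum_ne_top_of_geom (c := 4 * C1 * (2:ℝ) ^ ((1:ℝ)/2)) (r := (2:ℝ) ^ (-δ))
      (c' := 2 * C2 * (2:ℝ) ^ ((1:ℝ) - 2*δ)) (r' := (2:ℝ) ^ (-(2*δ)))
      (Real.rpow_lt_one_of_one_lt_of_neg one_lt_two (by linarith))
      (Real.rpow_lt_one_of_one_lt_of_neg one_lt_two (by linarith)) (fun n => ?_)
    have hc1 : (0:ℝ) ≤ 4 * C1 * (2:ℝ) ^ ((1:ℝ)/2) :=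
      mul_nonneg (mul_nonneg (by norm_num) C1_nonneg) (Real.rpow_nonneg (by norm_num) _)
    have hc2 : (0:ℝ) ≤ 2 * C2 * (2:ℝ) ^ ((1:ℝ) - 2*δ) :=
      mul_nonneg (mul_nonneg (by norm_num) C2_nonneg) (Real.rpow_nonneg (by norm_num) _)
    refine (measure_union_le _ _).trans (add_le_add ((hAbd n).trans ?_) ((hBbd n).trans ?_))
    · rw [← mul_assoc, ENNReal.ofReal_mul hc1,
        ENNReal.ofReal_pow (Real.rpow_nonneg (by norm_num) _)]
    · rw [← mul_assoc, ENNReal.ofReal_mul hc2,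
        ENNReal.ofReal_pow (Real.rpow_nonneg (by norm_num) _)]
  filter_upwards [MeasureTheory.ae_eventually_notMem hsum] with ω hω
  rw [Filter.eventually_atTop] at hω
  obtain ⟨N, hN⟩ := hω
  rw [Filter.eventually_atTop]
  refine ⟨(2:ℝ) ^ (N:ℝ), fun T hT => ?_⟩
  have hT1 : (1:ℝ) ≤ T := by
    refine le_trans ?_ hT
    have := Real.rpow_le_rpow_of_exponent_le one_le_two (Nat.cast_nonneg N)
    rwa [Real.rpow_zero] at this
  have hT0 : (0:ℝ) < T := lt_of_lt_of_le one_pos hT1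
  set L := Real.logb 2 T with hL_def
  have hL0 : 0 ≤ L := Real.logb_nonneg one_lt_two hT1
  set n := ⌊L⌋₊ with hn_def
  have hrw : (2:ℝ) ^ L = T := Real.rpow_logb two_pos (by norm_num) hT0
  have h2T : (2:ℝ) ^ (n:ℝ) ≤ T := by
    rw [← hrw]
    exact Real.rpow_le_rpow_of_exponent_le one_le_two (Nat.floor_le hL0)
  have hT2 : T < (2:ℝ) ^ ((n:ℝ) + 1) := by
    rw [← hrw]
    exact Real.rpow_lt_rpow_of_exponent_lt one_lt_two (Nat.lt_floor_add_one L)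
  have hnN : N ≤ n := by
    refine Nat.le_floor ?_
    rw [hL_def, show ((N:ℝ)) = Real.logb 2 ((2:ℝ) ^ (N:ℝ)) from (Real.logb_rpow two_pos (by norm_num)).symm]
    exact Real.logb_le_logb_of_le one_lt_two (Real.rpow_pos_of_pos two_pos _) hT
  have hmem := hN n hnN
  rw [mem_union] at hmem
  push_neg at hmem
  obtain ⟨hA1, hB1⟩ := hmem
  rw [hA_def, mem_setOf_eq, not_le] at hA1
  rw [hB_def, mem_setOf_eq, not_le] at hB1
  constructor
  · -- τ (T ^ (1/2 + δ)) ω > T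
    have hle : a n ≤ T ^ ((1:ℝ)/2 + δ) := by
      rw [ha_def]
      show (2:ℝ) ^ ((n:ℝ) * (1/2 + δ)) ≤ _
      rw [Real.rpow_mul (by norm_num : (0:ℝ) ≤ 2)]
      exact Real.rpow_le_rpow (Real.rpow_nonneg (by norm_num) _) h2T (by linarith)
    have := hmono ω (a n) (T ^ ((1:ℝ)/2 + δ)) (hapos n) hle
    linarith
  · -- T > τ (T ^ (1/2 - δ))
    have hle : T ^ ((1:ℝ)/2 - δ) ≤ b n := by
      rw [hb_def]
      show _ ≤ (2:ℝ) ^ (((n:ℝ) + 1) * (1/2 - δ))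
      rw [Real.rpow_mul (by norm_num : (0:ℝ) ≤ 2)]
      exact Real.rpow_le_rpow hT0.le hT2.le (by linarith)
    have := hmono ω (T ^ ((1:ℝ)/2 - δ)) (b n) (Real.rpow_pos_of_pos hT0 _) hle
    linarith
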